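/- Work in a monster model of a complete first-order theory T without the order property. Finitely satisfiable extensions over a model are unique: if M ⊆ B, and p, q are complete types over B (in possibly infinitely many variables) that are both finitely satisfiable in M and agree on M (p↾M = q↾M), then p = q. -/

import Mathlib

open FirstOrder Cardinal

universe u v

variable {L : FirstOrder.Language.{u, u}} {M : Type u} [L.Structure M]

/-- Two tuples have the same type over a parameter set `A` (in the ambient structure `M`,
thought of as a monster model): they satisfy the same formulas with parameters from `A`. -/
def SameTypeOver (L : FirstOrder.Language.{u, u}) {M : Type u} [L.Structure M] (A : Set M) {α : Type v} (a b : α → M) : Prop :=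
  ∀ (n : ℕ) (φ : L.Formula (α ⊕ Fin n)) (c : Fin n → M), (∀ i, c i ∈ A) →
    (φ.Realize (Sum.elim a c) ↔ φ.Realize (Sum.elim b c))

/-- `a ⫝_N B` : the type `tp(a / N ∪ B)` is finitely satisfiable in `N`: every formula with
parameters from `N ∪ B` satisfied by `a` is satisfied by a tuple from `N`. -/
def FinSatIndep (L : FirstOrder.Language.{u, u}) {M : Type u} [L.Structure M] (N : Set M) {α : Type v} (a : α → M) (B : Set M) : Prop :=
  ∀ (n : ℕ) (φ : L.Formula (α ⊕ Fin n)) (c : Fin n → M), (∀ i, c i ∈ N ∪ B) →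
    φ.Realize (Sum.elim a c) →
      ∃ a' : α → M, (∀ i, a' i ∈ N) ∧ φ.Realize (Sum.elim a' c)

/-- The structure `M` has the order property: some formula orders an infinite sequence
of finite tuples. -/
def HasOrderProp (L : FirstOrder.Language.{u, u}) (M : Type u) [L.Structure M] : Prop :=
  ∃ (k : ℕ) (φ : L.Formula (Fin k ⊕ Fin k)) (a : ℕ → Fin k → M),
    ∀ i j : ℕ, φ.Realize (Sum.elim (a i) (a j)) ↔ i < j

/-- An abstract complete type over `B ⊆ M` in variables `α`, represented as a set of
formula/parameter pairs: parameters come from `B`, every finite subset is realized in `M`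
(equivalently, the type is consistent with the elementary diagram of `M`), and the set is
complete (contains each formula over `B` or its negation). -/
def IsCompleteTypeOn (α : Type v) (B : Set M)
    (p : Set (Σ n : ℕ, L.Formula (α ⊕ Fin n) × (Fin n → M))) : Prop :=
  (∀ q ∈ p, ∀ i, q.2.2 i ∈ B) ∧
  (∀ s : Finset (Σ n : ℕ, L.Formula (α ⊕ Fin n) × (Fin n → M)), ↑s ⊆ p →
    ∃ a : α → M, ∀ q ∈ s, q.2.1.Realize (Sum.elim a q.2.2)) ∧
  (∀ (n : ℕ) (φ : L.Formula (α ⊕ Fin n)) (c : Fin n → M), (∀ i, c i ∈ B) →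
    (⟨n, (φ, c)⟩ ∈ p ∨ ⟨n, (φ.not, c)⟩ ∈ p))

namespace Stmt15Aux

open FirstOrder.Language

/-- `FinSatIndep` with an arbitrary finite parameter index type. -/
theorem finsat_gen {N B : Set M} {α : Type v} {a : α → M}
    (ha : FinSatIndep L N a B) {γ : Type} [Fintype γ]
    (Φ : L.Formula (α ⊕ γ)) (w : γ → M) (hw : ∀ g, w g ∈ N ∪ B)
    (h : Φ.Realize (Sum.elim a w)) :
    ∃ a' : α → M, (∀ i, a' i ∈ N) ∧ Φ.Realize (Sum.elim a' w) := by
  classical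
  set q := Fintype.equivFin γ with hq
  have key : ∀ vv : α → M, Sum.elim vv (w ∘ q.symm) ∘ Sum.map id q = Sum.elim vv w := by
    intro vv; funext x; cases x <;> simp
  obtain ⟨a', hS, hr⟩ := ha (Fintype.card γ) (Φ.relabel (Sum.map id q)) (w ∘ q.symm)
    (fun i => hw _) (by rw [Formula.realize_relabel, key]; exact h)
  rw [Formula.realize_relabel, key] at hr
  exact ⟨a', hS, hr⟩

theorem sametype_gen {N : Set M} {α : Type v} {a b : α → M}
    (hab : SameTypeOver L N a b) {γ : Type} [Fintype γ]
    (Φ : L.Formula (α ⊕ γ)) (w : γ → M) (hw : ∀ g, w g ∈ N) :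
    (Φ.Realize (Sum.elim a w) ↔ Φ.Realize (Sum.elim b w)) := by
  classical
  set q := Fintype.equivFin γ with hq
  have key : ∀ vv : α → M, Sum.elim vv (w ∘ q.symm) ∘ Sum.map id q = Sum.elim vv w := by
    intro vv; funext x; cases x <;> simp
  have := hab (Fintype.card γ) (Φ.relabel (Sum.map id q)) (w ∘ q.symm) (fun i => hw _)
  rwa [Formula.realize_relabel, key, Formula.realize_relabel, key] at this

theorem finsat_comp {N B : Set M} {α : Type v} {a : α → M} {k : ℕ} (e : Fin k → α)
    (ha : FinSatIndep L N a B) : FinSatIndep L N (a ∘ e) B := by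
  intro m ρ c' hc' hr
  have key : ∀ vv : α → M, Sum.elim vv c' ∘ Sum.map e id = Sum.elim (vv ∘ e) c' := by
    intro vv; funext x; cases x <;> simp
  obtain ⟨a', hS, h⟩ := ha m (ρ.relabel (Sum.map e id)) c' hc'
    (by rw [Formula.realize_relabel, key]; exact hr)
  rw [Formula.realize_relabel, key] at h
  exact ⟨a' ∘ e, fun i => hS _, h⟩

theorem sametype_comp {N : Set M} {α : Type v} {a b : α → M} {k : ℕ} (e : Fin k → α)
    (hab : SameTypeOver L N a b) : SameTypeOver L N (a ∘ e) (b ∘ e) := by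
  intro m ρ c' hc'
  have key : ∀ vv : α → M, Sum.elim vv c' ∘ Sum.map e id = Sum.elim (vv ∘ e) c' := by
    intro vv; funext x; cases x <;> simp
  have := hab m (ρ.relabel (Sum.map e id)) c' hc'
  rwa [Formula.realize_relabel, key, Formula.realize_relabel, key] at this

theorem realize_iInf_univ {M' : Type u} [L.Structure M'] {β : Type} [Fintype β] {δ : Type v}
    (f : β → L.Formula δ) (v : δ → M') :
    Formula.Realize (BoundedFormula.iInf f) v ↔ ∀ b : β, (f b).Realize v := by
  rw [Formula.Realize, BoundedFormula.realize_iInf]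
  simp [Formula.Realize]

/-- Choose a tuple in `N` realizing `χ` at `c` and agreeing with the prescribed signs on the
list of parameter tuples `cs`. -/
theorem stepAB {N B : Set M} {k n : ℕ} {a : Fin k → M} {c : Fin n → M}
    (ha : FinSatIndep L N a B) (hc : ∀ j, c j ∈ B)
    (χ ψ : L.Formula (Fin k ⊕ Fin n)) (hχ : χ.Realize (Sum.elim a c))
    (cs : List (Fin n → M)) (hcs : ∀ x ∈ cs, ∀ j, x j ∈ N)
    (sgn : (Fin n → M) → Prop) (hsgn : ∀ x ∈ cs, (ψ.Realize (Sum.elim a x) ↔ sgn x)) :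
    ∃ a' : Fin k → M, (∀ i, a' i ∈ N) ∧ χ.Realize (Sum.elim a' c) ∧
      ∀ x ∈ cs, (ψ.Realize (Sum.elim a' x) ↔ sgn x) := by
  classical
  let base : Option (Fin cs.length) → L.Formula (Fin k ⊕ Fin n) := fun o =>
    o.elim χ (fun i => if sgn (cs.get i) then ψ else ψ.not)
  let w : Option (Fin cs.length) × Fin n → M := fun p =>
    p.1.elim (c p.2) (fun i => cs.get i p.2)
  let Φ : L.Formula (Fin k ⊕ (Option (Fin cs.length) × Fin n)) :=
    BoundedFormula.iInf
      (fun o : Option (Fin cs.length) => (base o).relabel (Sum.map id (fun j => (o, j))))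
  have keyv : ∀ (vv : Fin k → M) (o : Option (Fin cs.length)),
      Sum.elim vv w ∘ Sum.map id (fun j => (o, j)) = Sum.elim vv (fun j => w (o, j)) := by
    intro vv o; funext x; cases x <;> simp
  have hrealize : ∀ vv : Fin k → M,
      Φ.Realize (Sum.elim vv w) ↔
        ∀ o : Option (Fin cs.length), (base o).Realize (Sum.elim vv (fun j => w (o, j))) := by
    intro vv
    rw [show Φ.Realize (Sum.elim vv w) =
      Formula.Realize (BoundedFormula.iInf
        (fun o : Option (Fin cs.length) => (base o).relabel (Sum.map id (fun j => (o, j)))))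
        (Sum.elim vv w) from rfl, realize_iInf_univ]
    refine forall_congr' fun o => ?_
    rw [Formula.realize_relabel, keyv]
  have haΦ : Φ.Realize (Sum.elim a w) := by
    rw [hrealize]
    rintro (_ | i)
    · exact hχ
    · by_cases hs : sgn (cs.get i)
      · show (if sgn (cs.get i) then ψ else ψ.not).Realize _
        rw [if_pos hs]
        exact (hsgn _ (List.get_mem cs i)).mpr hs
      · show (if sgn (cs.get i) then ψ else ψ.not).Realize _
        rw [if_neg hs, Formula.realize_not]
        intro hcon
        exact hs ((hsgn _ (List.get_mem cs i)).mp hcon)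
  obtain ⟨a', hS, hr⟩ := finsat_gen ha Φ w
    (by rintro ⟨_ | i, j⟩
        · exact Or.inr (hc j)
        · exact Or.inl (hcs _ (List.get_mem cs i) j)) haΦ
  rw [hrealize] at hr
  refine ⟨a', hS, hr none, ?_⟩
  intro x hx
  obtain ⟨i, rfl⟩ := List.mem_iff_get.mp hx
  have hri := hr (some i)
  by_cases hs : sgn (cs.get i)
  · exact ⟨fun _ => hs, fun _ => by
      have : (if sgn (cs.get i) then ψ else ψ.not).Realize (Sum.elim a' (fun j => w (some i, j))) := hri
      rwa [if_pos hs] at this⟩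
  · have : (if sgn (cs.get i) then ψ else ψ.not).Realize (Sum.elim a' (fun j => w (some i, j))) := hri
    rw [if_neg hs, Formula.realize_not] at this
    exact ⟨fun h => absurd h this, fun h => absurd h hs⟩

/-- Pull a tuple of parameters witnessing finitely many conditions over `S` into the
elementary substructure `S`. -/
theorem stepC (S : L.ElementarySubstructure M) {k n : ℕ}
    (ψ : L.Formula (Fin k ⊕ Fin n))
    (ps : List ((Fin k → M) × (Fin k → M)))
    (hps : ∀ p ∈ ps, (∀ i, p.1 i ∈ (S : Set M)) ∧ (∀ i, p.2 i ∈ (S : Set M)))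
    (y0 : Fin n → M)
    (hy0 : ∀ p ∈ ps, ψ.Realize (Sum.elim p.1 y0) ∧ ¬ ψ.Realize (Sum.elim p.2 y0)) :
    ∃ y : Fin n → M, (∀ j, y j ∈ (S : Set M)) ∧
      ∀ p ∈ ps, ψ.Realize (Sum.elim p.1 y) ∧ ¬ ψ.Realize (Sum.elim p.2 y) := by
  classical
  let P := Fin ps.length × Bool × Fin k
  let bigΦ : L.Formula (P ⊕ Fin n) :=
    BoundedFormula.iInf (fun i : Fin ps.length =>
      (ψ.relabel (Sum.map (fun j => (i, true, j)) id)) ⊓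
      ((ψ.not).relabel (Sum.map (fun j => (i, false, j)) id)))
  have hbig : ∀ (M' : Type u) (_ : L.Structure M') (v : P → M') (y : Fin n → M'),
      bigΦ.Realize (Sum.elim v y) ↔ ∀ i : Fin ps.length,
        ψ.Realize (Sum.elim (fun j => v (i, true, j)) y) ∧
        ¬ ψ.Realize (Sum.elim (fun j => v (i, false, j)) y) := by
    intro M' _ v y
    rw [show bigΦ.Realize (Sum.elim v y) =
      Formula.Realize (BoundedFormula.iInf (fun i : Fin ps.length =>
        (ψ.relabel (Sum.map (fun j => (i, true, j)) id)) ⊓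
        ((ψ.not).relabel (Sum.map (fun j => (i, false, j)) id)))) (Sum.elim v y) from rfl,
      realize_iInf_univ]
    refine forall_congr' fun i => ?_
    have k1 : Sum.elim v y ∘ Sum.map (fun j => (i, true, j)) id
        = Sum.elim (fun j => v (i, true, j)) y := by funext x; cases x <;> simp
    have k2 : Sum.elim v y ∘ Sum.map (fun j => (i, false, j)) id
        = Sum.elim (fun j => v (i, false, j)) y := by funext x; cases x <;> simp
    rw [Formula.realize_inf, Formula.realize_relabel, Formula.realize_relabel,
      Formula.realize_not, k1, k2]
  let v : P → M := fun p => cond p.2.1 ((ps.get p.1).1 p.2.2) ((ps.get p.1).2 p.2.2)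
  have hvS : ∀ p, v p ∈ (S : Set M) := by
    rintro ⟨i, s, j⟩
    cases s
    · exact (hps _ (List.get_mem ps i)).2 j
    · exact (hps _ (List.get_mem ps i)).1 j
  let v' : P → S := fun p => ⟨v p, hvS p⟩
  let Θ : L.Formula P := bigΦ.iExs (Fin n)
  have hM : Θ.Realize v := by
    rw [show Θ.Realize v = Formula.Realize (bigΦ.iExs (Fin n)) v from rfl,
      Formula.realize_iExs]
    refine ⟨y0, ?_⟩
    show bigΦ.Realize (fun x => Sum.elim v y0 x)
    rw [show (fun x => Sum.elim v y0 x) = Sum.elim v y0 from rfl, hbig M inferInstance]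
    exact fun i => hy0 _ (List.get_mem ps i)
  have hSrel : Θ.Realize v' := by
    rw [← S.subtype.map_formula Θ v']
    have hco : (⇑S.subtype ∘ v') = v := by
      funext p; simp [ElementarySubstructure.coe_subtype, v']
    rwa [hco]
  rw [show Θ.Realize v' = Formula.Realize (bigΦ.iExs (Fin n)) v' from rfl,
    Formula.realize_iExs] at hSrel
  obtain ⟨i0, hi0⟩ := hSrel
  have hi0' : bigΦ.Realize (Sum.elim v' i0) := hi0
  have hMM : bigΦ.Realize (⇑S.subtype ∘ Sum.elim v' i0) :=
    (S.subtype.map_formula bigΦ (Sum.elim v' i0)).mpr hi0'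
  have heq : (⇑S.subtype ∘ Sum.elim v' i0) = Sum.elim v (fun j => (i0 j : M)) := by
    funext x; cases x <;> simp [ElementarySubstructure.coe_subtype, v']
  rw [heq, hbig M inferInstance] at hMM
  refine ⟨fun j => (i0 j : M), fun j => (i0 j).2, ?_⟩
  intro p hp
  obtain ⟨i, rfl⟩ := List.mem_iff_get.mp hp
  exact hMM i


/-- The per-element invariant of the constructed sequence of triples. -/
def ElemTriple {k n : ℕ} (Ss : Set M) (ψ : L.Formula (Fin k ⊕ Fin n)) (c : Fin n → M)
    (t : (Fin k → M) × (Fin k → M) × (Fin n → M)) : Prop :=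
  (∀ i, t.1 i ∈ Ss) ∧ (∀ i, t.2.1 i ∈ Ss) ∧ (∀ j, t.2.2 j ∈ Ss) ∧
  ψ.Realize (Sum.elim t.1 c) ∧ ¬ ψ.Realize (Sum.elim t.2.1 c) ∧
  ψ.Realize (Sum.elim t.1 t.2.2) ∧ ¬ ψ.Realize (Sum.elim t.2.1 t.2.2)

/-- The pairwise invariant: `t` is newer than `u`. -/
def RelTriple {k n : ℕ} (ψ : L.Formula (Fin k ⊕ Fin n)) (a : Fin k → M)
    (t u : (Fin k → M) × (Fin k → M) × (Fin n → M)) : Prop :=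
  (ψ.Realize (Sum.elim u.1 t.2.2) ∧ ¬ ψ.Realize (Sum.elim u.2.1 t.2.2)) ∧
  (ψ.Realize (Sum.elim t.1 u.2.2) ↔ ψ.Realize (Sum.elim a u.2.2)) ∧
  (ψ.Realize (Sum.elim t.2.1 u.2.2) ↔ ψ.Realize (Sum.elim a u.2.2))

theorem ext_ex (S : L.ElementarySubstructure M) {B : Set M} {k n : ℕ}
    {a b : Fin k → M} {c : Fin n → M} (hc : ∀ j, c j ∈ B)
    (ha : FinSatIndep L (S : Set M) a B) (hb : FinSatIndep L (S : Set M) b B)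
    (hab : SameTypeOver L (S : Set M) a b)
    {ψ : L.Formula (Fin k ⊕ Fin n)}
    (hpos : ψ.Realize (Sum.elim a c)) (hneg : ¬ ψ.Realize (Sum.elim b c))
    (l : List ((Fin k → M) × (Fin k → M) × (Fin n → M)))
    (hl : (∀ t ∈ l, ElemTriple (S : Set M) ψ c t) ∧ l.Pairwise (RelTriple ψ a)) :
    ∃ t, (∀ t' ∈ t :: l, ElemTriple (S : Set M) ψ c t') ∧
      (t :: l).Pairwise (RelTriple ψ a) := by
  obtain ⟨hElem, hPW⟩ := hl
  obtain ⟨a', haS, hac, hax⟩ := Stmt15Aux.stepAB ha hc ψ ψ hpos (l.map (fun t => t.2.2))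
    (by intro x hx
        obtain ⟨t, ht, rfl⟩ := List.mem_map.mp hx
        exact (hElem t ht).2.2.1)
    (fun x => ψ.Realize (Sum.elim a x)) (fun x _ => Iff.rfl)
  obtain ⟨b', hbS, hbc', hbx⟩ := Stmt15Aux.stepAB hb hc ψ.not ψ
    (by rw [FirstOrder.Language.Formula.realize_not]; exact hneg)
    (l.map (fun t => t.2.2))
    (by intro x hx
        obtain ⟨t, ht, rfl⟩ := List.mem_map.mp hx
        exact (hElem t ht).2.2.1)
    (fun x => ψ.Realize (Sum.elim a x))
    (by intro x hx
        obtain ⟨t, ht, rfl⟩ := List.mem_map.mp hx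
        exact (hab n ψ t.2.2 (hElem t ht).2.2.1).symm)
  rw [FirstOrder.Language.Formula.realize_not] at hbc'
  obtain ⟨c', hcS, hcp⟩ := Stmt15Aux.stepC S ψ ((a', b') :: l.map (fun t => (t.1, t.2.1)))
    (by rintro p hp
        rcases List.mem_cons.mp hp with rfl | hp
        · exact ⟨haS, hbS⟩
        · obtain ⟨t, ht, rfl⟩ := List.mem_map.mp hp
          exact ⟨(hElem t ht).1, (hElem t ht).2.1⟩)
    c
    (by rintro p hp
        rcases List.mem_cons.mp hp with rfl | hp
        · exact ⟨hac, hbc'⟩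
        · obtain ⟨t, ht, rfl⟩ := List.mem_map.mp hp
          exact ⟨(hElem t ht).2.2.2.1, (hElem t ht).2.2.2.2.1⟩)
  have hdiag := hcp (a', b') (List.mem_cons_self)
  refine ⟨(a', b', c'), ?_, ?_⟩
  · intro t' ht'
    rcases List.mem_cons.mp ht' with rfl | ht'
    · exact ⟨haS, hbS, hcS, hac, hbc', hdiag.1, hdiag.2⟩
    · exact hElem t' ht'
  · rw [List.pairwise_cons]
    refine ⟨fun u hu => ?_, hPW⟩
    refine ⟨?_, hax u.2.2 (List.mem_map.mpr ⟨u, hu, rfl⟩),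
      hbx u.2.2 (List.mem_map.mpr ⟨u, hu, rfl⟩)⟩
    exact hcp (u.1, u.2.1) (List.mem_cons_of_mem _ (List.mem_map.mpr ⟨u, hu, rfl⟩))

theorem keyLemma (hNOP : ¬ HasOrderProp L M) [Nonempty M]
    (S : L.ElementarySubstructure M) (B : Set M)
    {k n : ℕ} {a b : Fin k → M} {c : Fin n → M} (hc : ∀ j, c j ∈ B)
    (ha : FinSatIndep L (S : Set M) a B) (hb : FinSatIndep L (S : Set M) b B)
    (hab : SameTypeOver L (S : Set M) a b)
    {ψ : L.Formula (Fin k ⊕ Fin n)}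
    (hpos : ψ.Realize (Sum.elim a c)) (hneg : ¬ ψ.Realize (Sum.elim b c)) : False := by
  classical
  set T := (Fin k → M) × (Fin k → M) × (Fin n → M) with hT
  let Inv : List T → Prop := fun l =>
    (∀ t ∈ l, ElemTriple (S : Set M) ψ c t) ∧ l.Pairwise (RelTriple ψ a)
  have hext : ∀ l, Inv l → ∃ t, Inv (t :: l) := fun l hl =>
    ext_ex S hc ha hb hab hpos hneg l hl
  have junk : T :=
    (fun _ => Classical.arbitrary M, fun _ => Classical.arbitrary M, fun _ => Classical.arbitrary M)
  let F : List T → T := fun l => if h : Inv l then Classical.choose (hext l h) else junk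
  have hF : ∀ l, Inv l → Inv (F l :: l) := by
    intro l h
    simp only [F, dif_pos h]
    exact Classical.choose_spec (hext l h)
  let hist : ℕ → List T := fun m => Nat.rec [] (fun _ ih => F ih :: ih) m
  have hist_succ : ∀ m, hist (m + 1) = F (hist m) :: hist m := fun m => rfl
  have hinv : ∀ m, Inv (hist m) := by
    intro m
    induction m with
    | zero => exact ⟨fun t ht => absurd ht List.not_mem_nil, List.Pairwise.nil⟩
    | succ m ih => rw [hist_succ]; exact hF _ ih
  let d : ℕ → T := fun m => F (hist m)
  have hmem : ∀ i m, i < m → d i ∈ hist m := by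
    intro i m him
    induction m with
    | zero => omega
    | succ m ih =>
      rw [hist_succ]
      rcases Nat.lt_succ_iff_lt_or_eq.mp him with h | rfl
      · exact List.mem_cons_of_mem _ (ih h)
      · exact List.mem_cons_self
  have hElem : ∀ i, ElemTriple (S : Set M) ψ c (d i) := fun i =>
    (hinv (i + 1)).1 _ (by rw [hist_succ]; exact List.mem_cons_self)
  have hR : ∀ i j, i < j → RelTriple ψ a (d j) (d i) := by
    intro i j hij
    have hp := (hinv (j + 1)).2
    rw [hist_succ] at hp
    exact (List.pairwise_cons.mp hp).1 _ (hmem i j hij)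
  apply hNOP
  let eK : (Fin k ⊕ (Fin k ⊕ Fin n)) ≃ Fin (k + (k + n)) :=
    (Equiv.sumCongr (Equiv.refl (Fin k)) finSumFinEquiv).trans finSumFinEquiv
  let u : ℕ → Fin (k + (k + n)) → M := fun m =>
    Sum.elim (d m).1 (Sum.elim (d m).2.1 (d m).2.2) ∘ eK.symm
  let g1 : Fin k ⊕ Fin n → Fin (k + (k + n)) ⊕ Fin (k + (k + n)) :=
    Sum.elim (fun x => Sum.inr (eK (Sum.inl x))) (fun y => Sum.inl (eK (Sum.inr (Sum.inr y))))
  let g2 : Fin k ⊕ Fin n → Fin (k + (k + n)) ⊕ Fin (k + (k + n)) :=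
    Sum.elim (fun x => Sum.inr (eK (Sum.inr (Sum.inl x))))
      (fun y => Sum.inl (eK (Sum.inr (Sum.inr y))))
  refine ⟨k + (k + n), ((ψ.relabel g1) ⊓ ((ψ.not).relabel g2)).not, u, ?_⟩
  intro i j
  have e1 : Sum.elim (u i) (u j) ∘ g1 = Sum.elim (d j).1 (d i).2.2 := by
    funext x; cases x <;> simp [u, g1]
  have e2 : Sum.elim (u i) (u j) ∘ g2 = Sum.elim (d j).2.1 (d i).2.2 := by
    funext x; cases x <;> simp [u, g2]
  rw [FirstOrder.Language.Formula.realize_not, FirstOrder.Language.Formula.realize_inf,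
    FirstOrder.Language.Formula.realize_relabel, FirstOrder.Language.Formula.realize_relabel,
    FirstOrder.Language.Formula.realize_not, e1, e2]
  constructor
  · intro h
    by_contra hij
    push_neg at hij
    rcases Nat.lt_or_ge j i with hji | hgei
    · obtain ⟨⟨h1, h2⟩, _⟩ := hR j i hji
      exact h ⟨h1, h2⟩
    · have : i = j := le_antisymm hgei hij
      subst this
      obtain ⟨_, _, _, _, _, h1, h2⟩ := hElem i
      exact h ⟨h1, h2⟩
  · intro hij
    obtain ⟨_, h2, h3⟩ := hR i j hij
    rintro ⟨hc1, hc2⟩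
    exact hc2 (h3.mpr (h2.mp hc1))


/-- Any formula over `α ⊕ Fin n` is equivalent to one whose `α`-variables are a finite tuple. -/
theorem reduce {α : Type v} {n : ℕ} (φ : L.Formula (α ⊕ Fin n)) :
    ∃ (k : ℕ) (e : Fin k → α) (ψ : L.Formula (Fin k ⊕ Fin n)),
      ∀ (v : α → M) (w : Fin n → M),
        ψ.Realize (Sum.elim (v ∘ e) w) ↔ φ.Realize (Sum.elim v w) := by
  classical
  set fv : Finset (α ⊕ Fin n) := BoundedFormula.freeVarFinset φ with hfv
  set t : Finset α := fv.preimage Sum.inl (Sum.inl_injective.injOn) with ht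
  refine ⟨t.card, fun i => (t.equivFin.symm i : α), ?_⟩
  have hsub : ↑fv ⊆ (↑fv : Set (α ⊕ Fin n)) := Set.Subset.rfl
  set φ₀ := φ.restrictFreeVar (Set.inclusion hsub) with hφ₀
  let uu : (↑fv : Set (α ⊕ Fin n)) → Fin t.card ⊕ Fin n := fun x =>
    match x with
    | ⟨Sum.inl y, hy⟩ => Sum.inl (t.equivFin ⟨y, by
        rw [ht, Finset.mem_preimage]
        exact hy⟩)
    | ⟨Sum.inr j, _⟩ => Sum.inr j
  refine ⟨Formula.relabel uu φ₀, ?_⟩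
  intro v w
  rw [Formula.realize_relabel]
  have key : Sum.elim (v ∘ fun i => ((t.equivFin.symm i : {x // x ∈ t}) : α)) w ∘ uu
      = (Sum.elim v w) ∘ ((↑) : (↑fv : Set (α ⊕ Fin n)) → α ⊕ Fin n) := by
    funext x
    match x with
    | ⟨Sum.inl y, hy⟩ => simp [uu]
    | ⟨Sum.inr j, hj⟩ => simp [uu]
  rw [key]
  exact BoundedFormula.realize_restrictFreeVar' hsub

end Stmt15Aux

/-- Uniqueness of finitely satisfiable extensions over a model, in a theory without the
order property: if `M ⊆ B` and the types of `a` and of `b` over `B` (in possibly infinitely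
many variables) are both finitely satisfiable in the model `M` and agree on `M`, then they
are equal. -/
theorem stmt15 (L : FirstOrder.Language.{u, u}) (M : Type u) [L.Structure M] [Infinite M]
    (hNOP : ¬ HasOrderProp L M)
    (S : L.ElementarySubstructure M) (B : Set M) (hSB : (S : Set M) ⊆ B)
    {α : Type v} (a b : α → M)
    (ha : FinSatIndep L (S : Set M) a B) (hb : FinSatIndep L (S : Set M) b B)
    (hab : SameTypeOver L (S : Set M) a b) :
    SameTypeOver L B a b := by
  have main : ∀ (a b : α → M), FinSatIndep L (S : Set M) a B → FinSatIndep L (S : Set M) b B →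
      SameTypeOver L (S : Set M) a b →
      ∀ (n : ℕ) (φ : L.Formula (α ⊕ Fin n)) (c : Fin n → M), (∀ i, c i ∈ B) →
        φ.Realize (Sum.elim a c) → φ.Realize (Sum.elim b c) := by
    intro a b ha hb hab n φ c hc hfa
    by_contra hfb
    obtain ⟨k, e, ψ, hψ⟩ := Stmt15Aux.reduce (M := M) φ
    exact Stmt15Aux.keyLemma hNOP S B hc
      (Stmt15Aux.finsat_comp e ha) (Stmt15Aux.finsat_comp e hb)
      (Stmt15Aux.sametype_comp e hab)
      ((hψ a c).mpr hfa) (fun hcon => hfb ((hψ b c).mp hcon))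
  intro n φ c hc
  exact ⟨main a b ha hb hab n φ c hc,
    main b a hb ha (fun n φ c hc => (hab n φ c hc).symm) n φ c hc⟩
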